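/- Let α > −1, let q ≥ 0 be an integer, and let m ≥ 1 be an integer. Then the set of real zeros of P_{2m+1}^{α,q} equals {−1} together with the set of real zeros of P_{2m}^{α+1,q}; in particular, P_{2m}^{α+1,q}(−1) ≠ 0 and the largest real zero of P_{2m+1}^{α,q} equals the largest real zero of P_{2m}^{α+1,q}. -/

import Mathlib

open MeasureTheory intervalIntegral Polynomial

/-- Pochhammer symbol `(a)_k = a (a+1) ⋯ (a+k-1)`. -/
noncomputable def poch (a : ℝ) (k : ℕ) : ℝ := ∏ i ∈ Finset.range k, (a + i)

/-- `Peven α q n x = P_{2n}^{α,q}(x)`, the monic generalized Gegenbauer-type polynomial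
`Σ_{k=0}^{n} (−n)_k (−n−q−1/2)_k / (k! (−2n−α−q−1/2)_k) x^{2n−2k}`. -/
noncomputable def Peven (α : ℝ) (q n : ℕ) (x : ℝ) : ℝ :=
  ∑ k ∈ Finset.range (n + 1),
    poch (-(n : ℝ)) k * poch (-(n : ℝ) - q - 1/2) k /
      ((Nat.factorial k : ℝ) * poch (-(2 * (n : ℝ)) - α - q - 1/2) k) * x ^ (2*n - 2*k)

/-- `Podd α q n x = P_{2n+1}^{α,q}(x) = (1+x) P_{2n}^{α+1,q}(x)`. -/
noncomputable def Podd (α : ℝ) (q n : ℕ) (x : ℝ) : ℝ := (1 + x) * Peven (α + 1) q n x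

/-- `P α q n x = P_n^{α,q}(x)`. -/
noncomputable def P (α : ℝ) (q : ℕ) (n : ℕ) (x : ℝ) : ℝ :=
  if Even n then Peven α q (n / 2) x else Podd α q (n / 2) x

lemma poch_zero (a : ℝ) : poch a 0 = 1 := by simp [poch]

lemma poch_succ (a : ℝ) (k : ℕ) : poch a (k+1) = poch a k * (a + k) := by
  simp [poch, Finset.prod_range_succ]

lemma poch_succ' (a : ℝ) (k : ℕ) : poch a (k+1) = a * poch (a+1) k := by
  rw [poch, Finset.prod_range_succ']
  rw [mul_comm]
  congr 1
  · push_cast; ring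
  · refine Finset.prod_congr rfl fun i _ => by push_cast; ring

lemma poch_ne_zero {a : ℝ} {k : ℕ} (h : ∀ i : ℕ, i < k → a + i ≠ 0) : poch a k ≠ 0 := by
  rw [poch]
  exact Finset.prod_ne_zero_iff.2 fun i hi => h i (Finset.mem_range.1 hi)

lemma neg_one_pow_poch_pos {a : ℝ} {k : ℕ} (h : ∀ i : ℕ, i < k → a + i < 0) :
    0 < (-1)^k * poch a k := by
  induction k with
  | zero => simp [poch_zero]
  | succ k ih =>
    have h1 : 0 < (-1)^k * poch a k := ih fun i hi => h i (by omega)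
    have h2 : a + k < 0 := h k (by omega)
    have : (-1:ℝ)^(k+1) * poch a (k+1) = ((-1)^k * poch a k) * (-(a+k)) := by
      rw [poch_succ]; ring
    rw [this]
    exact mul_pos h1 (by linarith)

lemma poch_eq_zero {a : ℝ} {k i : ℕ} (hik : i < k) (h : a + i = 0) : poch a k = 0 := by
  rw [poch]
  exact Finset.prod_eq_zero (Finset.mem_range.2 hik) h

/-- Chu–Vandermonde identity. -/
lemma chu_vandermonde : ∀ (n : ℕ) (b c : ℝ), (∀ i : ℕ, i < n → c + i ≠ 0) →
    ∑ k ∈ Finset.range (n+1), (-1)^k * (n.choose k : ℝ) * poch b k / poch c k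
      = poch (c - b) n / poch c n := by
  intro n
  induction n with
  | zero => intro b c _; simp [poch_zero]
  | succ n ih =>
    intro b c hc
    have hc0 : c ≠ 0 := by simpa using hc 0 (by omega)
    have hcn : ∀ i : ℕ, i < n → c + i ≠ 0 := fun i hi => hc i (by omega)
    have hcn' : ∀ i : ℕ, i < n → (c+1) + i ≠ 0 := by
      intro i hi
      have := hc (i+1) (by omega)
      push_cast at this ⊢
      intro hcon; apply this; linarith
    have hpc : poch c n ≠ 0 := poch_ne_zero hcn
    have hpc1 : poch (c+1) n ≠ 0 := poch_ne_zero hcn'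
    -- split the sum
    have key : ∑ k ∈ Finset.range (n+2), (-1)^k * ((n+1).choose k : ℝ) * poch b k / poch c k
        = (∑ k ∈ Finset.range (n+1), (-1)^k * (n.choose k : ℝ) * poch b k / poch c k)
          - (b/c) * ∑ k ∈ Finset.range (n+1), (-1)^k * (n.choose k : ℝ) * poch (b+1) k / poch (c+1) k := by
      rw [Finset.sum_range_succ' (fun k => (-1:ℝ)^k * ((n+1).choose k : ℝ) * poch b k / poch c k)]
      have split : ∀ k ∈ Finset.range (n+1),
          (-1:ℝ)^(k+1) * ((n+1).choose (k+1) : ℝ) * poch b (k+1) / poch c (k+1)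
          = (-1)^(k+1) * (n.choose (k+1) : ℝ) * poch b (k+1) / poch c (k+1)
            + (-(b/c)) * ((-1)^k * (n.choose k : ℝ) * poch (b+1) k / poch (c+1) k) := by
        intro k _
        rw [Nat.choose_succ_succ]
        push_cast
        rw [poch_succ' b, poch_succ' c, mul_div_mul_comm]
        field_simp
        ring
      rw [Finset.sum_congr rfl split, Finset.sum_add_distrib]
      have e1 : (∑ k ∈ Finset.range (n+1), (-1:ℝ)^(k+1) * (n.choose (k+1) : ℝ) * poch b (k+1) / poch c (k+1))
          + (-1:ℝ)^0 * ((n+1).choose 0 : ℝ) * poch b 0 / poch c 0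
          = ∑ k ∈ Finset.range (n+2), (-1:ℝ)^k * (n.choose k : ℝ) * poch b k / poch c k := by
        rw [Finset.sum_range_succ' (fun k => (-1:ℝ)^k * (n.choose k : ℝ) * poch b k / poch c k)]
        simp
      have e2 : ∑ k ∈ Finset.range (n+2), (-1:ℝ)^k * (n.choose k : ℝ) * poch b k / poch c k
          = ∑ k ∈ Finset.range (n+1), (-1:ℝ)^k * (n.choose k : ℝ) * poch b k / poch c k := by
        rw [Finset.sum_range_succ]
        simp [Nat.choose_succ_self]
      rw [← Finset.mul_sum]
      have e3 := e1.trans e2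
      linarith
    rw [key, ih b c hcn, ih (b+1) (c+1) hcn']
    have hsub : (c+1) - (b+1) = c - b := by ring
    rw [hsub]
    -- algebra
    have hrel : c * poch (c+1) n = poch c n * (c + n) := by
      rw [← poch_succ', poch_succ]
    have hcnn : c + (n:ℝ) ≠ 0 := hc n (by omega)
    have hY : poch (c+1) n = poch c n * (c + n) / c := by
      field_simp
      linarith [hrel]
    rw [poch_succ (c-b) n, poch_succ c n, hY]
    field_simp
    ring

lemma poch_neg_nat (n : ℕ) : ∀ k : ℕ, k ≤ n → poch (-(n:ℝ)) k = (-1)^k * (Nat.factorial k : ℝ) * (n.choose k : ℝ) := by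
  intro k
  induction k with
  | zero => intro _; simp [poch_zero]
  | succ k ih =>
    intro hk
    have hk' : k ≤ n := by omega
    have h0 : (n.choose (k + 1) * (k + 1) : ℕ) = n.choose k * (n - k) := Nat.choose_succ_right_eq n k
    have h : ((n.choose (k+1) : ℝ)) * (k+1) = (n.choose k : ℝ) * ((n:ℝ) - k) := by
      have := congrArg (Nat.cast : ℕ → ℝ) h0
      push_cast [Nat.cast_sub hk'] at this
      linarith
    rw [poch_succ, ih hk', Nat.factorial_succ]
    push_cast
    linear_combination ((-1:ℝ)^k * (Nat.factorial k : ℝ)) * h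

noncomputable def co (b : ℝ) (q n k : ℕ) : ℝ :=
  poch (-(n:ℝ)) k * poch (-(n:ℝ) - (q:ℝ) - 1/2) k /
    ((Nat.factorial k : ℝ) * poch (-(2*(n:ℝ)) - b - (q:ℝ) - 1/2) k)

noncomputable def Qf (b : ℝ) (q n : ℕ) (y : ℝ) : ℝ :=
  ∑ k ∈ Finset.range (n+1), co b q n k * y^(n-k)

lemma Peven_eq_Qf (b : ℝ) (q n : ℕ) (x : ℝ) : Peven b q n x = Qf b q n (x^2) := by
  unfold Peven Qf co
  refine Finset.sum_congr rfl fun k hk => ?_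
  have h2 : 2*n-2*k = 2*(n-k) := by omega
  rw [h2, pow_mul]

section Signs

variable {b : ℝ} (hb : 0 < b) (q n : ℕ)

lemma den_neg (hb : 0 < b) (q n : ℕ) : ∀ i : ℕ, i < n → (-(2*(n:ℝ)) - b - (q:ℝ) - 1/2) + i < 0 := by
  intro i hi
  have : (i:ℝ) < n := by exact_mod_cast hi
  have hq : (0:ℝ) ≤ q := Nat.cast_nonneg q
  have hn : (0:ℝ) ≤ n := Nat.cast_nonneg n
  linarith

lemma den_ne (hb : 0 < b) (q n : ℕ) : ∀ i : ℕ, i < n → (-(2*(n:ℝ)) - b - (q:ℝ) - 1/2) + i ≠ 0 :=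
  fun i hi => ne_of_lt (den_neg hb q n i hi)

lemma poch_den_ne (hb : 0 < b) (q n : ℕ) {k : ℕ} (hk : k ≤ n) :
    poch (-(2*(n:ℝ)) - b - (q:ℝ) - 1/2) k ≠ 0 :=
  poch_ne_zero fun i hi => den_ne hb q n i (by omega)

lemma co_eq (hb : 0 < b) (q n : ℕ) {k : ℕ} (hk : k ≤ n) :
    co b q n k = (-1)^k * (n.choose k : ℝ) * poch (-(n:ℝ) - (q:ℝ) - 1/2) k /
      poch (-(2*(n:ℝ)) - b - (q:ℝ) - 1/2) k := by
  unfold co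
  rw [poch_neg_nat n k hk]
  have h1 : (Nat.factorial k : ℝ) ≠ 0 := by exact_mod_cast Nat.factorial_ne_zero k
  rw [show (-1:ℝ)^k * (Nat.factorial k : ℝ) * (n.choose k : ℝ) * poch (-(n:ℝ) - (q:ℝ) - 1/2) k
      = (Nat.factorial k : ℝ) * ((-1)^k * (n.choose k : ℝ) * poch (-(n:ℝ) - (q:ℝ) - 1/2) k) from by ring,
    mul_div_mul_left _ _ h1]

lemma Qf_one_pos (hb : 0 < b) (q n : ℕ) : 0 < Qf b q n 1 := by
  have : Qf b q n 1 = ∑ k ∈ Finset.range (n+1),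
      (-1)^k * (n.choose k : ℝ) * poch (-(n:ℝ) - (q:ℝ) - 1/2) k /
        poch (-(2*(n:ℝ)) - b - (q:ℝ) - 1/2) k := by
    unfold Qf
    refine Finset.sum_congr rfl fun k hk => ?_
    rw [one_pow, mul_one, co_eq hb q n (by simpa [Nat.lt_succ_iff] using hk)]
  rw [this, chu_vandermonde n _ _ (den_ne hb q n)]
  have hnum : 0 < (-1:ℝ)^n * poch ((-(2*(n:ℝ)) - b - (q:ℝ) - 1/2) - (-(n:ℝ) - (q:ℝ) - 1/2)) n := by
    apply neg_one_pow_poch_pos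
    intro i hi
    have : (i:ℝ) < n := by exact_mod_cast hi
    linarith
  have hden : 0 < (-1:ℝ)^n * poch (-(2*(n:ℝ)) - b - (q:ℝ) - 1/2) n :=
    neg_one_pow_poch_pos (den_neg hb q n)
  have hrw : poch ((-(2*(n:ℝ)) - b - (q:ℝ) - 1/2) - (-(n:ℝ) - (q:ℝ) - 1/2)) n /
      poch (-(2*(n:ℝ)) - b - (q:ℝ) - 1/2) n
      = ((-1:ℝ)^n * poch ((-(2*(n:ℝ)) - b - (q:ℝ) - 1/2) - (-(n:ℝ) - (q:ℝ) - 1/2)) n) /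
        ((-1:ℝ)^n * poch (-(2*(n:ℝ)) - b - (q:ℝ) - 1/2) n) := by
    rw [mul_div_mul_left]
    exact pow_ne_zero _ (by norm_num)
  rw [hrw]
  exact div_pos hnum hden

end Signs

lemma cont_w (s t : ℝ) (hs : 0 ≤ s) (ht : 0 ≤ t) :
    Continuous fun y : ℝ => y ^ s * (1-y) ^ t :=
  (Real.continuous_rpow_const hs).mul
    ((Real.continuous_rpow_const ht).comp (continuous_const.sub continuous_id))

lemma ibp_step (s t : ℝ) (hs : 0 < s) (ht : 0 ≤ t) :
    (s+1) * ∫ y in (0:ℝ)..1, y^s * (1-y)^(t+1) = (t+1) * ∫ y in (0:ℝ)..1, y^(s+1) * (1-y)^t := by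
  have hderiv : ∀ y ∈ Set.uIcc (0:ℝ) 1,
      HasDerivAt (fun y : ℝ => y^(s+1) * (1-y)^(t+1))
        ((s+1)*y^s*(1-y)^(t+1) - (t+1)*y^(s+1)*(1-y)^t) y := by
    intro y _
    have h1 : HasDerivAt (fun y : ℝ => y^(s+1)) ((s+1)*y^s) y := by
      have := Real.hasDerivAt_rpow_const (x := y) (p := s+1) (Or.inr (by linarith))
      simpa using this
    have h2 : HasDerivAt (fun y : ℝ => (1-y)^(t+1)) (-((t+1)*(1-y)^t)) y := by
      have h0 : HasDerivAt (fun z : ℝ => z^(t+1)) ((t+1)*(1-y)^t) (1-y) := by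
        have := Real.hasDerivAt_rpow_const (x := 1-y) (p := t+1) (Or.inr (by linarith))
        simpa using this
      have h3 : HasDerivAt (fun y : ℝ => 1 - y) (-1) y := by
        simpa using (hasDerivAt_id y).const_sub 1
      have := h0.comp y h3
      exact this.congr_deriv (by ring)
    have := h1.mul h2
    exact this.congr_deriv (by ring)
  have hc1 : Continuous fun y : ℝ => y^s * (1-y)^(t+1) := cont_w s (t+1) hs.le (by linarith)
  have hc2 : Continuous fun y : ℝ => y^(s+1) * (1-y)^t := cont_w (s+1) t (by linarith) ht
  have hcont : Continuous fun y : ℝ => (s+1)*y^s*(1-y)^(t+1) - (t+1)*y^(s+1)*(1-y)^t := by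
    apply Continuous.sub
    · exact (continuous_const.mul (Real.continuous_rpow_const hs.le)).mul
        ((Real.continuous_rpow_const (by linarith)).comp (continuous_const.sub continuous_id))
    · exact (continuous_const.mul (Real.continuous_rpow_const (by linarith))).mul
        ((Real.continuous_rpow_const ht).comp (continuous_const.sub continuous_id))
  have key := intervalIntegral.integral_eq_sub_of_hasDerivAt hderiv (hcont.intervalIntegrable 0 1)
  have hF1 : (1:ℝ)^(s+1) * (1-(1:ℝ))^(t+1) = 0 := by
    rw [show (1:ℝ)-1 = 0 from by ring, Real.zero_rpow (by linarith)]
    ring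
  have hF0 : (0:ℝ)^(s+1) * (1-(0:ℝ))^(t+1) = 0 := by
    rw [Real.zero_rpow (by linarith)]
    ring
  rw [hF1, hF0, sub_zero] at key
  have split : (∫ y in (0:ℝ)..1, ((s+1)*y^s*(1-y)^(t+1) - (t+1)*y^(s+1)*(1-y)^t))
      = (s+1) * (∫ y in (0:ℝ)..1, y^s*(1-y)^(t+1)) - (t+1) * ∫ y in (0:ℝ)..1, y^(s+1)*(1-y)^t := by
    rw [← intervalIntegral.integral_const_mul, ← intervalIntegral.integral_const_mul,
      ← intervalIntegral.integral_sub (f := fun y : ℝ => (s+1) * (y^s * (1-y)^(t+1)))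
        (g := fun y : ℝ => (t+1) * (y^(s+1) * (1-y)^t)) ((continuous_const.mul hc1).intervalIntegrable 0 1)
        ((continuous_const.mul hc2).intervalIntegrable 0 1)]
    apply intervalIntegral.integral_congr
    intro y _
    ring
  rw [split] at key
  linarith

noncomputable def Iw (b s : ℝ) : ℝ := ∫ y in (0:ℝ)..1, y^s * (1-y)^b

lemma Iw_rec {b : ℝ} (hb : 0 < b) {s : ℝ} (hs : 0 < s) :
    (s + b + 2) * Iw b (s+1) = (s+1) * Iw b s := by
  have hsplit : (∫ y in (0:ℝ)..1, y^s * (1-y)^(b+1))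
      = Iw b s - Iw b (s+1) := by
    unfold Iw
    rw [← intervalIntegral.integral_sub ((cont_w s b hs.le hb.le).intervalIntegrable 0 1)
      ((cont_w (s+1) b (by linarith) hb.le).intervalIntegrable 0 1)]
    apply intervalIntegral.integral_congr
    intro y hy
    rw [Set.uIcc_of_le (by norm_num : (0:ℝ) ≤ 1)] at hy
    have hy0 : 0 ≤ y := hy.1
    have hy1 : y ≤ 1 := hy.2
    have e1 : (1-y)^(b+1) = (1-y)^b * (1-y) := by
      rw [Real.rpow_add' (by linarith) (by linarith), Real.rpow_one]
    have e2 : y^(s+1) = y^s * y := by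
      rw [Real.rpow_add' hy0 (by linarith), Real.rpow_one]
    simp only []
    rw [e1, e2]
    ring
  have := ibp_step s b hs hb.le
  rw [hsplit] at this
  unfold Iw at *
  linarith

lemma Iw_pos {b s : ℝ} (hb : 0 < b) (hs : 0 < s) : 0 < Iw b s := by
  apply intervalIntegral.intervalIntegral_pos_of_pos_on
    ((cont_w s b hs.le hb.le).intervalIntegrable 0 1)
  · intro y hy
    exact mul_pos (Real.rpow_pos_of_pos hy.1 s)
      (Real.rpow_pos_of_pos (by linarith [hy.2]) b)
  · norm_num

lemma moment {b : ℝ} (hb : 0 < b) (q n : ℕ) :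
    ∀ k, k ≤ n → Iw b (((n:ℝ)+q+1/2) - k)
      = Iw b ((n:ℝ)+q+1/2) * poch (-((n:ℝ)+q+b+3/2)) k / poch (-((n:ℝ)+q+1/2)) k := by
  intro k
  induction k with
  | zero => intro _; simp [poch_zero]
  | succ k ih =>
    intro hk
    have hk' : k ≤ n := by omega
    set E : ℝ := (n:ℝ)+q+1/2 with hE
    set D : ℝ := (n:ℝ)+q+b+3/2 with hD
    have hkn : (k:ℝ) ≤ n := by exact_mod_cast hk'
    have hkn1 : ((k:ℝ)+1) ≤ n + 1 := by
      have : ((k+1:ℕ):ℝ) ≤ n := by exact_mod_cast hk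
      push_cast at this; linarith
    have hq : (0:ℝ) ≤ q := Nat.cast_nonneg q
    have hs : 0 < E - (k+1) := by
      have : ((k+1:ℕ):ℝ) ≤ n := by exact_mod_cast hk
      push_cast at this
      rw [hE]; linarith
    have hrec := Iw_rec hb hs
    have heq : E - (k+1) + 1 = E - k := by ring
    rw [heq] at hrec
    have hEk : E - (k:ℝ) ≠ 0 := by linarith
    have hpE : poch (-E) k ≠ 0 := by
      apply poch_ne_zero
      intro i hi
      have : (i:ℝ) < n := by
        have : (i:ℝ) < k := by exact_mod_cast hi
        linarith
      rw [hE]; intro hcon; linarith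
    have hpE1 : (-E) + (k:ℝ) ≠ 0 := by intro hcon; apply hEk; linarith
    have hcast : ((k+1:ℕ):ℝ) = (k:ℝ)+1 := by push_cast; ring
    have hsbt : E - (k+1) + b + 2 = D - k := by rw [hE, hD]; ring
    rw [hsbt] at hrec
    -- hrec : (D - k) * Iw b (E - k) = (E - k) * Iw b (E - (k+1))
    have hIw : Iw b (E - ((k:ℝ)+1)) = (D - k) * Iw b (E - k) / (E - k) := by
      rw [eq_div_iff hEk]
      linear_combination -hrec
    rw [hcast, poch_succ, poch_succ, hIw, ih hk']
    field_simp
    ring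

lemma Qf_cont (b : ℝ) (q n : ℕ) : Continuous (Qf b q n) := by
  unfold Qf
  exact continuous_finset_sum _ fun k _ => continuous_const.mul (continuous_pow _)

lemma ortho {b : ℝ} (hb : 0 < b) (q n : ℕ) (hn : 1 ≤ n) :
    (∫ y in (0:ℝ)..1, Qf b q n y * (y^((q:ℝ)+1/2) * (1-y)^b)) = 0 := by
  have hq2 : (0:ℝ) ≤ (q:ℝ)+1/2 := by positivity
  have hw : Continuous fun y : ℝ => y^((q:ℝ)+1/2) * (1-y)^b := cont_w _ _ hq2 hb.le
  have hterm : ∀ k : ℕ, Continuous fun y : ℝ =>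
      co b q n k * (y^(n-k) * (y^((q:ℝ)+1/2) * (1-y)^b)) :=
    fun k => continuous_const.mul ((continuous_pow _).mul hw)
  have h1 : (∫ y in (0:ℝ)..1, Qf b q n y * (y^((q:ℝ)+1/2) * (1-y)^b))
      = ∑ k ∈ Finset.range (n+1),
          ∫ y in (0:ℝ)..1, co b q n k * (y^(n-k) * (y^((q:ℝ)+1/2) * (1-y)^b)) := by
    rw [← intervalIntegral.integral_finset_sum (fun k _ => (hterm k).intervalIntegrable 0 1)]
    apply intervalIntegral.integral_congr
    intro y _
    simp only [Qf, Finset.sum_mul, mul_assoc]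
  have h2 : ∀ k, k ≤ n → (∫ y in (0:ℝ)..1, co b q n k * (y^(n-k) * (y^((q:ℝ)+1/2) * (1-y)^b)))
      = co b q n k * Iw b (((n:ℝ)+q+1/2) - k) := by
    intro k hk
    rw [intervalIntegral.integral_const_mul]
    congr 1
    have hcast : ((n:ℝ)+q+1/2) - k = ((n-k:ℕ):ℝ) + ((q:ℝ)+1/2) := by
      rw [Nat.cast_sub hk]; push_cast; ring
    rw [hcast]
    unfold Iw
    apply intervalIntegral.integral_congr
    intro y hy
    rw [Set.uIcc_of_le (by norm_num : (0:ℝ) ≤ 1)] at hy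
    have hy0 : 0 ≤ y := hy.1
    have e : y ^ (((n-k:ℕ):ℝ) + ((q:ℝ)+1/2)) = y ^ ((n-k:ℕ):ℝ) * y ^ ((q:ℝ)+1/2) :=
      Real.rpow_add' hy0 (by positivity)
    simp only []
    rw [e, Real.rpow_natCast]
    ring
  have h3 : ∀ k ∈ Finset.range (n+1), co b q n k * Iw b (((n:ℝ)+q+1/2) - k)
      = Iw b ((n:ℝ)+q+1/2) * ((-1)^k * (n.choose k : ℝ) * poch (-((n:ℝ)+(q:ℝ)+b+3/2)) k
          / poch (-(2*(n:ℝ)) - b - (q:ℝ) - 1/2) k) := by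
    intro k hk
    have hk' : k ≤ n := by simpa [Nat.lt_succ_iff] using hk
    rw [moment hb q n k hk', co_eq hb q n hk']
    have hEeq : (-(n:ℝ) - (q:ℝ) - 1/2) = -((n:ℝ)+(q:ℝ)+1/2) := by ring
    rw [hEeq]
    have hpE : poch (-((n:ℝ)+(q:ℝ)+1/2)) k ≠ 0 := by
      apply poch_ne_zero
      intro i hi
      have h1 : (i:ℝ) < n := by
        have : (i:ℝ) < k := by exact_mod_cast hi
        have : (k:ℝ) ≤ n := by exact_mod_cast hk'
        linarith
      have hq : (0:ℝ) ≤ q := Nat.cast_nonneg q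
      intro hcon; linarith
    rw [div_mul_div_comm,
      show ((-1:ℝ)^k * (n.choose k:ℝ) * poch (-((n:ℝ)+(q:ℝ)+1/2)) k)
          * (Iw b ((n:ℝ)+(q:ℝ)+1/2) * poch (-((n:ℝ)+(q:ℝ)+b+3/2)) k)
        = (Iw b ((n:ℝ)+(q:ℝ)+1/2) * ((-1)^k * (n.choose k:ℝ) * poch (-((n:ℝ)+(q:ℝ)+b+3/2)) k))
            * poch (-((n:ℝ)+(q:ℝ)+1/2)) k from by ring,
      mul_div_mul_right _ _ hpE, mul_div_assoc]
  rw [h1, Finset.sum_congr rfl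
      (fun k hk => (h2 k (by simpa [Nat.lt_succ_iff] using hk)).trans (h3 k hk)),
    ← Finset.mul_sum, chu_vandermonde n _ _ (den_ne hb q n)]
  have hz : poch ((-(2*(n:ℝ)) - b - (q:ℝ) - 1/2) - (-((n:ℝ)+(q:ℝ)+b+3/2))) n = 0 := by
    apply poch_eq_zero (i := n-1) (by omega)
    push_cast [Nat.cast_sub hn]
    ring
  rw [hz]
  simp

lemma exists_Qf_root {b : ℝ} (hb : 0 < b) (q n : ℕ) (hn : 1 ≤ n) :
    ∃ y ∈ Set.Ioo (0:ℝ) 1, Qf b q n y = 0 := by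
  by_contra hcon
  push_neg at hcon
  have hq2 : (0:ℝ) ≤ (q:ℝ)+1/2 := by positivity
  have hw : Continuous fun y : ℝ => y^((q:ℝ)+1/2) * (1-y)^b := cont_w _ _ hq2 hb.le
  have hwpos : ∀ y ∈ Set.Ioo (0:ℝ) 1, 0 < y^((q:ℝ)+1/2) * (1-y)^b := fun y hy =>
    mul_pos (Real.rpow_pos_of_pos hy.1 _) (Real.rpow_pos_of_pos (by linarith [hy.2]) _)
  have hQc := Qf_cont b q n
  have hhalf : (1/2 : ℝ) ∈ Set.Ioo (0:ℝ) 1 := by norm_num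
  -- constant sign of Qf on Ioo 0 1
  have hsign : ∀ y ∈ Set.Ioo (0:ℝ) 1,
      (0 < Qf b q n (1/2) → 0 < Qf b q n y) ∧ (Qf b q n (1/2) < 0 → Qf b q n y < 0) := by
    intro y hy
    constructor <;> intro hhalfsign
    · rcases lt_or_gt_of_ne (hcon y hy) with h' | h'
      · exfalso
        have hic := intermediate_value_uIcc (a := y) (b := 1/2) (hQc.continuousOn)
        have h0m : (0:ℝ) ∈ Set.uIcc (Qf b q n y) (Qf b q n (1/2)) :=
          Set.mem_uIcc.2 (Or.inl ⟨h'.le, hhalfsign.le⟩)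
        obtain ⟨z, hz, hz0⟩ := hic h0m
        rw [Set.mem_uIcc] at hz
        have hzIoo : z ∈ Set.Ioo (0:ℝ) 1 := by
          rcases hz with ⟨h1, h2⟩ | ⟨h1, h2⟩ <;>
            exact ⟨by rcases hy with ⟨a1,a2⟩; rcases hhalf with ⟨b1,b2⟩; linarith,
              by rcases hy with ⟨a1,a2⟩; rcases hhalf with ⟨b1,b2⟩; linarith⟩
        exact hcon z hzIoo hz0
      · exact h'
    · rcases lt_or_gt_of_ne (hcon y hy) with h' | h'
      · exact h'
      · exfalso
        have hic := intermediate_value_uIcc (a := y) (b := 1/2) (hQc.continuousOn)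
        have h0m : (0:ℝ) ∈ Set.uIcc (Qf b q n y) (Qf b q n (1/2)) :=
          Set.mem_uIcc.2 (Or.inr ⟨hhalfsign.le, h'.le⟩)
        obtain ⟨z, hz, hz0⟩ := hic h0m
        rw [Set.mem_uIcc] at hz
        have hzIoo : z ∈ Set.Ioo (0:ℝ) 1 := by
          rcases hz with ⟨h1, h2⟩ | ⟨h1, h2⟩ <;>
            exact ⟨by rcases hy with ⟨a1,a2⟩; rcases hhalf with ⟨b1,b2⟩; linarith,
              by rcases hy with ⟨a1,a2⟩; rcases hhalf with ⟨b1,b2⟩; linarith⟩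
        exact hcon z hzIoo hz0
  have hint : IntervalIntegrable (fun y => Qf b q n y * (y^((q:ℝ)+1/2) * (1-y)^b)) volume 0 1 :=
    (hQc.mul hw).intervalIntegrable 0 1
  rcases lt_or_gt_of_ne (hcon (1/2) hhalf) with hneg | hpos
  · have : 0 < ∫ y in (0:ℝ)..1, (-(Qf b q n y * (y^((q:ℝ)+1/2) * (1-y)^b))) := by
      apply intervalIntegral.intervalIntegral_pos_of_pos_on hint.neg
      · intro y hy
        have := (hsign y hy).2 hneg
        have := hwpos y hy
        have : Qf b q n y * (y^((q:ℝ)+1/2) * (1-y)^b) < 0 := mul_neg_of_neg_of_pos ‹Qf b q n y < 0› ‹0 < y^((q:ℝ)+1/2) * (1-y)^b›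
        simp only [Pi.neg_apply]
        linarith
      · norm_num
    rw [intervalIntegral.integral_neg, ortho hb q n hn] at this
    norm_num at this
  · have : 0 < ∫ y in (0:ℝ)..1, Qf b q n y * (y^((q:ℝ)+1/2) * (1-y)^b) := by
      apply intervalIntegral.intervalIntegral_pos_of_pos_on hint
      · intro y hy
        exact mul_pos ((hsign y hy).1 hpos) (hwpos y hy)
      · norm_num
    rw [ortho hb q n hn] at this
    norm_num at this


/-- The zero set of `P_{2m+1}^{α,q}` is `{−1}` together with the zero set of
`P_{2m}^{α+1,q}`; in particular `P_{2m}^{α+1,q}(−1) ≠ 0` and the largest real zeros of the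
two polynomials coincide. -/
theorem zeros_of_Podd (α : ℝ) (hα : -1 < α) (q : ℕ) (m : ℕ) (hm : 1 ≤ m) :
    {t : ℝ | Podd α q m t = 0} = insert (-1 : ℝ) {t : ℝ | Peven (α + 1) q m t = 0} ∧
    Peven (α + 1) q m (-1) ≠ 0 ∧
    ∃ b : ℝ, IsGreatest {t : ℝ | Podd α q m t = 0} b ∧
      IsGreatest {t : ℝ | Peven (α + 1) q m t = 0} b := by
  have hb : 0 < α + 1 := by linarith
  have hPQ : ∀ t : ℝ, Peven (α+1) q m t = Qf (α+1) q m (t^2) := fun t => Peven_eq_Qf _ _ _ t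
  set Z : Set ℝ := {t : ℝ | Peven (α+1) q m t = 0} with hZ
  have hneg1 : 0 < Peven (α+1) q m (-1) := by
    rw [hPQ, show ((-1:ℝ))^2 = 1 from by norm_num]
    exact Qf_one_pos hb q m
  have hcont : Continuous fun t : ℝ => Peven (α+1) q m t := by
    have heq : (fun t : ℝ => Peven (α+1) q m t) = fun t => Qf (α+1) q m (t^2) := funext hPQ
    rw [heq]
    exact (Qf_cont _ _ _).comp (continuous_pow 2)
  have hclosed : IsClosed Z := isClosed_eq hcont continuous_const
  obtain ⟨y, hyIoo, hy0⟩ := exists_Qf_root hb q m hm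
  have ht0 : Real.sqrt y ∈ Z := by
    simp only [hZ, Set.mem_setOf_eq, hPQ, Real.sq_sqrt hyIoo.1.le]
    exact hy0
  set C : ℝ := ∑ k ∈ Finset.range m, |co (α+1) q m (k+1)| with hC
  have hC0 : 0 ≤ C := Finset.sum_nonneg fun k _ => abs_nonneg _
  have hQpos : ∀ u : ℝ, 1 + C ≤ u → 0 < Qf (α+1) q m u := by
    intro u hu
    have hu1 : (1:ℝ) ≤ u := by linarith
    have hu0 : (0:ℝ) < u := by linarith
    have hbound : ∀ k ∈ Finset.range m,
        -(|co (α+1) q m (k+1)| * u^(m-1)) ≤ co (α+1) q m (k+1) * u^(m-(k+1)) := by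
      intro k _
      have h1 : u^(m-(k+1)) ≤ u^(m-1) := pow_le_pow_right₀ hu1 (by omega)
      have h2 : (0:ℝ) ≤ u^(m-(k+1)) := by positivity
      have h3 := neg_abs_le (co (α+1) q m (k+1))
      have h4 := abs_nonneg (co (α+1) q m (k+1))
      nlinarith
    have hsum := Finset.sum_le_sum hbound
    have hlhs : ∑ k ∈ Finset.range m, -(|co (α+1) q m (k+1)| * u^(m-1)) = -(C * u^(m-1)) := by
      rw [hC, Finset.sum_mul, ← Finset.sum_neg_distrib]
    rw [hlhs] at hsum
    have hexp : Qf (α+1) q m u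
        = (∑ k ∈ Finset.range m, co (α+1) q m (k+1) * u^(m-(k+1))) + co (α+1) q m 0 * u^(m-0) := by
      unfold Qf
      rw [Finset.sum_range_succ']
    have hco0 : co (α+1) q m 0 = 1 := by simp [co, poch_zero]
    have hym : u^m = u * u^(m-1) := by
      conv_lhs => rw [show m = (m-1)+1 from by omega]
      rw [pow_succ]
      ring
    have hpow : (0:ℝ) < u^(m-1) := pow_pos hu0 _
    rw [hexp, hco0]
    have : u^(m-0) = u * u^(m-1) := by rw [Nat.sub_zero]; exact hym
    rw [this]
    nlinarith
  have hbdd : BddAbove Z := by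
    refine ⟨Real.sqrt (1 + C), fun t ht => ?_⟩
    have hQt : Qf (α+1) q m (t^2) = 0 := by rw [← hPQ]; exact ht
    have hlt : t^2 < 1 + C := by
      by_contra hcon
      push_neg at hcon
      exact (hQpos _ hcon).ne' hQt
    calc t ≤ |t| := le_abs_self t
      _ = Real.sqrt (t^2) := (Real.sqrt_sq_eq_abs t).symm
      _ ≤ Real.sqrt (1 + C) := Real.sqrt_le_sqrt hlt.le
  have hne : Z.Nonempty := ⟨_, ht0⟩
  have hbZ : sSup Z ∈ Z := hclosed.csSup_mem hne hbdd
  have hBge : ∀ t ∈ Z, t ≤ sSup Z := fun t ht => le_csSup hbdd ht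
  have hB0 : 0 ≤ sSup Z := le_trans (Real.sqrt_nonneg y) (hBge _ ht0)
  have hseteq : {t : ℝ | Podd α q m t = 0} = insert (-1:ℝ) Z := by
    ext t
    simp only [Set.mem_setOf_eq, Set.mem_insert_iff, Podd, mul_eq_zero, hZ]
    constructor
    · rintro (h | h)
      · left; linarith
      · right; exact h
    · rintro (h | h)
      · left; rw [h]; ring
      · right; exact h
  refine ⟨hseteq, ne_of_gt hneg1, sSup Z, ⟨?_, ?_⟩, ⟨hbZ, hBge⟩⟩
  · rw [hseteq]; exact Set.mem_insert_of_mem _ hbZ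
  · intro x hx
    rw [hseteq] at hx
    rcases hx with h | h
    · rw [h]; linarith
    · exact hBge x h
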